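/- The periodicity of the Y-system reduces to finite order of an automorphism: with the automorphisms τ_+ and τ_- of the field K = Frac(ℤ[Y_{ii'}]) defined below and φ = τ_-τ_+, all solutions (Y_{i,i',t}) of the Y-system associated with (Δ,Δ') are periodic in t of period dividing 2(h+h') if and only if the order of φ is finite and divides h+h'. -/

import Mathlib

set_option linter.unusedSectionVars false
set_option linter.unnecessarySimpa false
set_option linter.unusedVariables false
set_option maxHeartbeats 1000000
set_option synthInstance.maxHeartbeats 1000000


open scoped BigOperators

/-- The field `K = Frac(ℤ[Y_{ii'}])`. -/
abbrev YSysField (I I' : Type) := FractionRing (MvPolynomial (I × I') ℤ)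

/-- The generator `Y_{ii'}` of `K`. -/
noncomputable def Ygen {I I' : Type} (i : I) (i' : I') : YSysField I I' :=
  algebraMap (MvPolynomial (I × I') ℤ) (YSysField I I') (MvPolynomial.X (i, i'))

namespace YAux

lemma bool_flip {x y : Bool} (hne : x ≠ y) (c : Bool) : (y = c) ↔ ¬ (x = c) := by
  cases x <;> cases y <;> cases c <;> simp_all

lemma bool_flip' {x y : Bool} (hne : x ≠ y) (c : Bool) : (c = y) ↔ ¬ (c = x) := by
  cases x <;> cases y <;> cases c <;> simp_all

lemma bool_resolve {x y z : Bool} (h1 : x ≠ y) (h2 : ¬ (x = z)) : y = z := by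
  cases x <;> cases y <;> cases z <;> simp_all

lemma bool_resolve' {x y z : Bool} (h1 : y ≠ z) (h2 : ¬ (x = y)) : x = z := by
  cases x <;> cases y <;> cases z <;> simp_all

section rel
variable {R F : Type*} [CommRing R] [IsDomain R] {K : Type*} [Field K] [Field F]
  [Algebra R K] [IsFractionRing R K] (ev : R →+* F)

def YRel (x : K) (u : F) : Prop :=
  ∃ P Q : R, ev Q ≠ 0 ∧ x * algebraMap R K Q = algebraMap R K P ∧ u * ev Q = ev P

lemma yrel_algebraMap (P : R) : YRel (K := K) ev (algebraMap R K P) (ev P) :=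
  ⟨P, 1, by simp, by simp, by simp⟩

lemma yrel_one : YRel (K := K) ev 1 1 := by simpa using yrel_algebraMap (K := K) ev 1

lemma yrel_mul {x y : K} {u v : F} (hx : YRel ev x u) (hy : YRel ev y v) :
    YRel ev (x * y) (u * v) := by
  obtain ⟨P, Q, hQ, hxQ, huQ⟩ := hx
  obtain ⟨P', Q', hQ', hxQ', huQ'⟩ := hy
  refine ⟨P * P', Q * Q', by simp [hQ, hQ'], ?_, ?_⟩
  · rw [map_mul, map_mul, ← hxQ, ← hxQ']; ring
  · rw [map_mul, map_mul, ← huQ, ← huQ']; ring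

lemma yrel_add {x y : K} {u v : F} (hx : YRel ev x u) (hy : YRel ev y v) :
    YRel ev (x + y) (u + v) := by
  obtain ⟨P, Q, hQ, hxQ, huQ⟩ := hx
  obtain ⟨P', Q', hQ', hxQ', huQ'⟩ := hy
  refine ⟨P * Q' + P' * Q, Q * Q', by simp [hQ, hQ'], ?_, ?_⟩
  · rw [map_add, map_mul, map_mul, map_mul]
    linear_combination algebraMap R K Q' * hxQ + algebraMap R K Q * hxQ'
  · rw [map_add, map_mul, map_mul, map_mul]
    linear_combination ev Q' * huQ + ev Q * huQ'

lemma yrel_unique {x : K} {u v : F} (hx : YRel ev x u) (hy : YRel ev x v) : u = v := by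
  obtain ⟨P, Q, hQ, hxQ, huQ⟩ := hx
  obtain ⟨P', Q', hQ', hxQ', huQ'⟩ := hy
  have hinj := IsFractionRing.injective R K
  have hPQ : P * Q' = P' * Q := by
    apply hinj
    rw [map_mul, map_mul, ← hxQ, ← hxQ']
    ring
  have := congrArg ev hPQ
  rw [map_mul, map_mul] at this
  have h2 : u * (ev Q * ev Q') = v * (ev Q * ev Q') := by
    linear_combination ev Q' * huQ - ev Q * huQ' + this
  exact mul_right_cancel₀ (by simp [hQ, hQ']) h2

lemma yrel_zero_of {x : K} {u : F} (hx : YRel ev x u) (hu : u ≠ 0) : x ≠ 0 := by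
  intro hc
  subst hc
  obtain ⟨P, Q, hQ, hxQ, huQ⟩ := hx
  have : P = 0 := by
    apply IsFractionRing.injective R K
    rw [map_zero]; linear_combination -hxQ
  rw [this, map_zero] at huQ
  exact hu (by
    have := mul_eq_zero.1 huQ
    tauto)

lemma yrel_inv {x : K} {u : F} (hx : YRel ev x u) (hu : u ≠ 0) :
    YRel ev x⁻¹ u⁻¹ := by
  have hxne : x ≠ 0 := yrel_zero_of ev hx hu
  obtain ⟨P, Q, hQ, hxQ, huQ⟩ := hx
  have hevP : ev P ≠ 0 := by rw [← huQ]; exact mul_ne_zero hu hQ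
  have hPne : P ≠ 0 := fun hc => hevP (by rw [hc, map_zero])
  have halgP : algebraMap R K P ≠ 0 := fun hc =>
    hPne (IsFractionRing.injective R K (by rw [hc, map_zero]))
  refine ⟨Q, P, hevP, ?_, ?_⟩
  · field_simp
    linear_combination -hxQ
  · field_simp
    linear_combination -huQ

lemma yrel_pow {x : K} {u : F} (hx : YRel ev x u) (n : ℕ) : YRel ev (x ^ n) (u ^ n) := by
  induction n with
  | zero => simpa using yrel_one (K := K) ev
  | succ n ih => rw [pow_succ, pow_succ]; exact yrel_mul ev ih hx

lemma yrel_prod {ι : Type*} (s : Finset ι) (f : ι → K) (g : ι → F)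
    (hfg : ∀ j ∈ s, YRel ev (f j) (g j)) :
    YRel ev (∏ j ∈ s, f j) (∏ j ∈ s, g j) := by
  classical
  induction s using Finset.induction_on with
  | empty => simpa using yrel_one (K := K) ev
  | @insert _ _ hns ih =>
    rw [Finset.prod_insert hns, Finset.prod_insert hns]
    exact yrel_mul ev (hfg _ (Finset.mem_insert_self _ _))
      (ih fun j hj => hfg j (Finset.mem_insert_of_mem hj))
end rel

variable {I I' : Type} [Fintype I] [Fintype I'] [DecidableEq I] [DecidableEq I']

lemma ygen_ne_zero (i : I) (i' : I') : Ygen (I' := I') i i' ≠ 0 := by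
  intro hc
  have h0 : algebraMap (MvPolynomial (I × I') ℤ) (YSysField I I') (MvPolynomial.X (i,i'))
      = algebraMap (MvPolynomial (I × I') ℤ) (YSysField I I') 0 := by
    simpa [Ygen] using hc
  exact MvPolynomial.X_ne_zero _
    (IsFractionRing.injective (MvPolynomial (I × I') ℤ) (YSysField I I') h0)

lemma one_add_ygen_ne_zero (i : I) (i' : I') : (1 : YSysField I I') + Ygen i i' ≠ 0 := by
  intro hc
  have h1 : algebraMap (MvPolynomial (I × I') ℤ) (YSysField I I') (MvPolynomial.X (i,i'))
      = algebraMap (MvPolynomial (I × I') ℤ) (YSysField I I') (-1) := by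
    rw [map_neg, map_one]; show Ygen i i' = -1; linear_combination hc
  have h2 := congrArg (MvPolynomial.coeff 0)
    (IsFractionRing.injective (MvPolynomial (I × I') ℤ) (YSysField I I') h1)
  simp [MvPolynomial.coeff_zero_X] at h2

lemma one_add_inv_ygen_ne_zero (i : I) (i' : I') : (1 : YSysField I I') + (Ygen i i')⁻¹ ≠ 0 := by
  intro hc
  have h1 : (Ygen i i')⁻¹ = -1 := by linear_combination hc
  have : Ygen i i' = -1 := by
    rw [← inv_inv (Ygen i i'), h1]; norm_num
  exact one_add_ygen_ne_zero i i' (by rw [this]; ring)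

lemma aut_eq_one {σ : RingAut (YSysField I I')}
    (hfix : ∀ (i : I) (i' : I'), σ (Ygen i i') = Ygen i i') : σ = 1 := by
  have hcomp : (σ : YSysField I I' →+* YSysField I I').comp
        (algebraMap (MvPolynomial (I × I') ℤ) (YSysField I I'))
      = (RingHom.id _).comp (algebraMap (MvPolynomial (I × I') ℤ) (YSysField I I')) := by
    apply MvPolynomial.ringHom_ext
    · intro r
      simp only [RingHom.comp_apply, RingHom.id_apply]
      rw [show (MvPolynomial.C r : MvPolynomial (I × I') ℤ) = (r : MvPolynomial (I × I') ℤ) from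
        eq_intCast (MvPolynomial.C : ℤ →+* _) r, map_intCast, map_intCast]
    · intro v
      simp only [RingHom.comp_apply, RingHom.id_apply]
      have := hfix v.1 v.2
      simpa [Ygen] using this
  have hid : (σ : YSysField I I' →+* YSysField I I') = RingHom.id _ :=
    IsLocalization.ringHom_ext (nonZeroDivisors (MvPolynomial (I × I') ℤ)) hcomp
  ext x
  exact RingHom.congr_fun hid x

lemma aut_ne_zero (σ : RingAut (YSysField I I')) {x : YSysField I I'} (hx : x ≠ 0) :
    σ x ≠ 0 := fun hc => hx (σ.injective (by simpa using hc))

variable (a : I → I → ℕ) (a' : I' → I' → ℕ)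

noncomputable def Aprod (i : I) (i' : I') : YSysField I I' := ∏ j, (1 + Ygen j i') ^ a i j
noncomputable def Bprod (i : I) (i' : I') : YSysField I I' := ∏ j', (1 + (Ygen i j')⁻¹) ^ a' i' j'

lemma aprod_ne_zero (i : I) (i' : I') : Aprod a i i' ≠ 0 :=
  Finset.prod_ne_zero_iff.2 fun j _ => pow_ne_zero _ (one_add_ygen_ne_zero j i')

lemma bprod_ne_zero (i : I) (i' : I') : Bprod a' i i' ≠ 0 :=
  Finset.prod_ne_zero_iff.2 fun j' _ => pow_ne_zero _ (one_add_inv_ygen_ne_zero i j')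

variable (εI : I → Bool) (εI' : I' → Bool) (τ : Bool → RingAut (YSysField I I'))

noncomputable def gAut (t : ℤ) : RingAut (YSysField I I') :=
  (τ false * τ true) ^ (t / 2) * (if Even t then 1 else τ false)

lemma gAut_zero : gAut τ 0 = 1 := by simp [gAut]

lemma gAut_one : gAut τ 1 = τ false := by
  have h1 : ¬ Even (1 : ℤ) := by decide
  have h2 : (1 : ℤ) / 2 = 0 := by decide
  simp [gAut, h1, h2]

lemma gAut_succ_even {t : ℤ} (ht : Even t) : gAut τ (t + 1) = gAut τ t * τ false := by
  have h1 : ¬ Even (t + 1) := by simpa [Int.even_add_one] using ht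
  have h2 : (t + 1) / 2 = t / 2 := by
    rw [Int.even_iff] at ht; omega
  simp [gAut, h1, ht, h2]

lemma gAut_succ_odd {t : ℤ} (ht : ¬ Even t) : gAut τ (t + 1) = gAut τ t * τ true := by
  have h1 : Even (t + 1) := Int.even_add_one.2 ht
  have h2 : (t + 1) / 2 = t / 2 + 1 := by
    rw [Int.even_iff] at ht; omega
  simp only [gAut, h1, if_pos, if_neg ht, mul_one, h2, zpow_add_one]
  rw [mul_assoc]

lemma gAut_two_mul (N : ℕ) : gAut τ (2 * N) = (τ false * τ true) ^ N := by
  have h1 : Even (2 * (N : ℤ)) := ⟨N, by ring⟩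
  have h2 : (2 * (N : ℤ)) / 2 = N := by omega
  simp [gAut, h1, h2, zpow_natCast]

lemma gAut_periodic {N : ℕ} (hφ : (τ false * τ true) ^ N = 1) (t : ℤ) :
    gAut τ (t + 2 * N) = gAut τ t := by
  have h1 : Even (t + 2 * (N : ℤ)) ↔ Even t := by
    simp only [Int.even_iff]; omega
  have h2 : (t + 2 * (N : ℤ)) / 2 = t / 2 + N := by omega
  have h3 : (τ false * τ true) ^ ((N : ℤ)) = 1 := by rw [zpow_natCast, hφ]
  simp [gAut, h1, h2, zpow_add, h3]

section steps

variable (hτ : ∀ (b : Bool) (i : I) (i' : I'),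
      τ b (Ygen i i') =
        if (εI i = εI' i') = (b = true) then
          Ygen i i' * Aprod a i i' * (Bprod a' i i')⁻¹
        else (Ygen i i')⁻¹)

include hτ

lemma gAut_succ_apply_main {t : ℤ} {i : I} {i' : I'}
    (he : (εI i = εI' i') ↔ ¬ Even t) :
    gAut τ (t + 1) (Ygen i i')
      = gAut τ t (Ygen i i') * gAut τ t (Aprod a i i') * (gAut τ t (Bprod a' i i'))⁻¹ := by
  by_cases hE : Even t
  · rw [gAut_succ_even τ hE]
    show gAut τ t (τ false (Ygen i i')) = _
    rw [hτ false i i', if_pos (by simp [eq_iff_iff]; tauto), map_mul, map_mul, map_inv₀]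
  · rw [gAut_succ_odd τ hE]
    show gAut τ t (τ true (Ygen i i')) = _
    rw [hτ true i i', if_pos (by simp [eq_iff_iff]; tauto), map_mul, map_mul, map_inv₀]

lemma gAut_succ_apply_inv {t : ℤ} {i : I} {i' : I'}
    (he : (εI i = εI' i') ↔ Even t) :
    gAut τ (t + 1) (Ygen i i') = (gAut τ t (Ygen i i'))⁻¹ := by
  by_cases hE : Even t
  · rw [gAut_succ_even τ hE]
    show gAut τ t (τ false (Ygen i i')) = _
    rw [hτ false i i', if_neg (by simp [eq_iff_iff]; tauto), map_inv₀]
  · rw [gAut_succ_odd τ hE]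
    show gAut τ t (τ true (Ygen i i')) = _
    rw [hτ true i i', if_neg (by simp [eq_iff_iff]; tauto), map_inv₀]

lemma gAut_pred_apply_main {t : ℤ} {i : I} {i' : I'}
    (he : (εI i = εI' i') ↔ Even t) :
    gAut τ t (Ygen i i')
      = gAut τ (t-1) (Ygen i i') * gAut τ (t-1) (Aprod a i i') * (gAut τ (t-1) (Bprod a' i i'))⁻¹ := by
  have hE : Even (t - 1) ↔ ¬ Even t := by rw [Int.even_sub]; simp
  have := gAut_succ_apply_main a a' εI εI' τ hτ (t := t - 1) (i := i) (i' := i') (by tauto)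
  rwa [show t - 1 + 1 = t by ring] at this

lemma gAut_pred_apply_inv {t : ℤ} {i : I} {i' : I'}
    (he : (εI i = εI' i') ↔ ¬ Even t) :
    gAut τ t (Ygen i i') = (gAut τ (t-1) (Ygen i i'))⁻¹ := by
  have hE : Even (t - 1) ↔ ¬ Even t := by rw [Int.even_sub]; simp
  have := gAut_succ_apply_inv a a' εI εI' τ hτ (t := t - 1) (i := i) (i' := i') (by tauto)
  rwa [show t - 1 + 1 = t by ring] at this

end steps

noncomputable def Yhat (t : ℤ) (i : I) (i' : I') : YSysField I I' :=
  if (εI i = εI' i') ↔ Even t then gAut τ t (Ygen i i') else (gAut τ t (Ygen i i'))⁻¹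

lemma Yhat_ne_zero (t : ℤ) (i : I) (i' : I') : Yhat εI εI' τ t i i' ≠ 0 := by
  unfold Yhat
  split
  · exact aut_ne_zero _ (ygen_ne_zero i i')
  · exact inv_ne_zero (aut_ne_zero _ (ygen_ne_zero i i'))

lemma one_add_Yhat_ne_zero (t : ℤ) (i : I) (i' : I') : 1 + Yhat εI εI' τ t i i' ≠ 0 := by
  unfold Yhat
  split
  · rw [show (1 : YSysField I I') + gAut τ t (Ygen i i') = gAut τ t (1 + Ygen i i') by
      rw [map_add, map_one]]
    exact aut_ne_zero _ (one_add_ygen_ne_zero i i')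
  · rw [show (1 : YSysField I I') + (gAut τ t (Ygen i i'))⁻¹ = gAut τ t (1 + (Ygen i i')⁻¹) by
      rw [map_add, map_one, map_inv₀]]
    exact aut_ne_zero _ (one_add_inv_ygen_ne_zero i i')

lemma one_add_inv_Yhat_ne_zero (t : ℤ) (i : I) (i' : I') : 1 + (Yhat εI εI' τ t i i')⁻¹ ≠ 0 := by
  unfold Yhat
  split
  · rw [show (1 : YSysField I I') + (gAut τ t (Ygen i i'))⁻¹ = gAut τ t (1 + (Ygen i i')⁻¹) by
      rw [map_add, map_one, map_inv₀]]
    exact aut_ne_zero _ (one_add_inv_ygen_ne_zero i i')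
  · rw [inv_inv]
    rw [show (1 : YSysField I I') + gAut τ t (Ygen i i') = gAut τ t (1 + Ygen i i') by
      rw [map_add, map_one]]
    exact aut_ne_zero _ (one_add_ygen_ne_zero i i')

lemma Yhat_periodic {N : ℕ} (hφ : (τ false * τ true) ^ N = 1) (t : ℤ) (i : I) (i' : I') :
    Yhat εI εI' τ (t + 2 * N) i i' = Yhat εI εI' τ t i i' := by
  have hEE : Even (t + 2 * (N : ℤ)) ↔ Even t := by
    simp only [Int.even_iff]; omega
  unfold Yhat
  rw [gAut_periodic τ hφ t]
  exact if_congr (iff_congr Iff.rfl hEE) rfl rfl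

lemma Yhat_rel
    (hτ : ∀ (b : Bool) (i : I) (i' : I'),
      τ b (Ygen i i') =
        if (εI i = εI' i') = (b = true) then
          Ygen i i' * Aprod a i i' * (Bprod a' i i')⁻¹
        else (Ygen i i')⁻¹)
    (hbip : ∀ i j, a i j ≠ 0 → εI i ≠ εI j)
    (hbip' : ∀ i' j', a' i' j' ≠ 0 → εI' i' ≠ εI' j')
    (t : ℤ) (i : I) (i' : I') :
    Yhat εI εI' τ (t-1) i i' * Yhat εI εI' τ (t+1) i i' *
        ∏ j', (1 + (Yhat εI εI' τ t i j')⁻¹) ^ a' i' j'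
      = ∏ j, (1 + Yhat εI εI' τ t j i') ^ a i j := by
  have hEm : Even (t-1) ↔ ¬ Even t := by rw [Int.even_sub]; simp
  have hEp : Even (t+1) ↔ ¬ Even t := Int.even_add_one
  by_cases he : (εI i = εI' i') ↔ Even t
  · have hY1 : Yhat εI εI' τ (t+1) i i' = gAut τ t (Ygen i i') := by
      unfold Yhat
      rw [if_neg (by tauto), gAut_succ_apply_inv a a' εI εI' τ hτ (by tauto), inv_inv]
    have hY0 : Yhat εI εI' τ (t-1) i i' = (gAut τ (t-1) (Ygen i i'))⁻¹ := by
      unfold Yhat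
      rw [if_neg (by tauto)]
    have hσρ := gAut_pred_apply_main a a' εI εI' τ hτ (i := i) (i' := i') (t := t) he
    have hP1 : ∏ j', (1 + (Yhat εI εI' τ t i j')⁻¹) ^ a' i' j'
        = gAut τ (t-1) (Bprod a' i i') := by
      unfold Bprod
      rw [map_prod]
      refine Finset.prod_congr rfl fun j' _ => ?_
      by_cases ha : a' i' j' = 0
      · simp [ha]
      · have hflip : (εI i = εI' j') ↔ ¬ (εI i = εI' i') := bool_flip' (hbip' i' j' ha) _
        have hYt : Yhat εI εI' τ t i j' = (gAut τ t (Ygen i j'))⁻¹ := by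
          unfold Yhat; rw [if_neg (by tauto)]
        have hg : gAut τ t (Ygen i j') = (gAut τ (t-1) (Ygen i j'))⁻¹ :=
          gAut_pred_apply_inv a a' εI εI' τ hτ (by tauto)
        rw [hYt, inv_inv, hg, map_pow, map_add, map_one, map_inv₀]
    have hP2 : ∏ j, (1 + Yhat εI εI' τ t j i') ^ a i j
        = gAut τ (t-1) (Aprod a i i') := by
      unfold Aprod
      rw [map_prod]
      refine Finset.prod_congr rfl fun j _ => ?_
      by_cases ha : a i j = 0
      · simp [ha]
      · have hne : εI i ≠ εI j := hbip i j ha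
        have hflip : (εI j = εI' i') ↔ ¬ (εI i = εI' i') := bool_flip hne _
        have hYt : Yhat εI εI' τ t j i' = (gAut τ t (Ygen j i'))⁻¹ := by
          unfold Yhat; rw [if_neg (by tauto)]
        have hg : gAut τ t (Ygen j i') = (gAut τ (t-1) (Ygen j i'))⁻¹ :=
          gAut_pred_apply_inv a a' εI εI' τ hτ (by tauto)
        rw [hYt, hg, inv_inv, map_pow, map_add, map_one]
    rw [hY0, hY1, hσρ, hP1, hP2]
    have h1 : gAut τ (t-1) (Ygen i i') ≠ 0 := aut_ne_zero _ (ygen_ne_zero i i')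
    have h2 : gAut τ (t-1) (Bprod a' i i') ≠ 0 := aut_ne_zero _ (bprod_ne_zero a' i i')
    field_simp
  · have hY1 : Yhat εI εI' τ (t+1) i i'
        = gAut τ t (Ygen i i') * gAut τ t (Aprod a i i') * (gAut τ t (Bprod a' i i'))⁻¹ := by
      unfold Yhat
      rw [if_pos (by tauto)]
      exact gAut_succ_apply_main a a' εI εI' τ hτ (by tauto)
    have hg : gAut τ t (Ygen i i') = (gAut τ (t-1) (Ygen i i'))⁻¹ :=
      gAut_pred_apply_inv a a' εI εI' τ hτ (by tauto)
    have hY0 : Yhat εI εI' τ (t-1) i i' = (gAut τ t (Ygen i i'))⁻¹ := by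
      unfold Yhat
      rw [if_pos (by tauto), hg, inv_inv]
    have hP1 : ∏ j', (1 + (Yhat εI εI' τ t i j')⁻¹) ^ a' i' j'
        = gAut τ t (Bprod a' i i') := by
      unfold Bprod
      rw [map_prod]
      refine Finset.prod_congr rfl fun j' _ => ?_
      by_cases ha : a' i' j' = 0
      · simp [ha]
      · have hflip : (εI i = εI' j') ↔ ¬ (εI i = εI' i') := bool_flip' (hbip' i' j' ha) _
        have hYt : Yhat εI εI' τ t i j' = gAut τ t (Ygen i j') := by
          unfold Yhat; rw [if_pos (by tauto)]
        rw [hYt, map_pow, map_add, map_one, map_inv₀]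
    have hP2 : ∏ j, (1 + Yhat εI εI' τ t j i') ^ a i j
        = gAut τ t (Aprod a i i') := by
      unfold Aprod
      rw [map_prod]
      refine Finset.prod_congr rfl fun j _ => ?_
      by_cases ha : a i j = 0
      · simp [ha]
      · have hne : εI i ≠ εI j := hbip i j ha
        have hflip : (εI j = εI' i') ↔ ¬ (εI i = εI' i') := bool_flip hne _
        have hYt : Yhat εI εI' τ t j i' = gAut τ t (Ygen j i') := by
          unfold Yhat; rw [if_pos (by tauto)]
        rw [hYt, map_pow, map_add, map_one]
    rw [hY0, hY1, hP1, hP2]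
    have h1 : gAut τ t (Ygen i i') ≠ 0 := aut_ne_zero _ (ygen_ne_zero i i')
    have h2 : gAut τ t (Bprod a' i i') ≠ 0 := aut_ne_zero _ (bprod_ne_zero a' i i')
    field_simp


lemma fix_of_periodic (N : ℕ) (i : I) (i' : I')
    (hp : Yhat εI εI' τ (2 * (N:ℤ)) i i' = Yhat εI εI' τ 0 i i') :
    ((τ false * τ true) ^ N) (Ygen i i') = Ygen i i' := by
  have hE2 : Even (2 * (N:ℤ)) := ⟨N, by ring⟩
  have hE0 : Even (0:ℤ) := Even.zero
  unfold Yhat at hp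
  rw [gAut_two_mul, gAut_zero] at hp
  by_cases he : εI i = εI' i'
  · rw [if_pos (by simp [he, hE2]), if_pos (by simp [he, hE0])] at hp
    simpa using hp
  · rw [if_neg (by simp [he, hE2]), if_neg (by simp [he, hE0])] at hp
    have := inv_injective hp
    simpa using this

section spec
variable {F : Type} [Field F] (Y : ℤ → I → I' → F)

noncomputable def mden (i : I) (i' : I') : F :=
  (∏ j, (1 + Y 0 j i') ^ a i j) * (∏ j', (1 + (Y 0 i j')⁻¹) ^ a' i' j')⁻¹

noncomputable def pt (b : Bool) : I × I' → F := fun w =>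
  if b then (if εI w.1 = εI' w.2 then Y 0 w.1 w.2
             else Y 1 w.1 w.2 * (mden a a' Y w.1 w.2)⁻¹)
  else (if εI w.1 = εI' w.2 then Y 1 w.1 w.2 else (Y 0 w.1 w.2)⁻¹)

noncomputable def evB (b : Bool) : MvPolynomial (I × I') ℤ →+* F :=
  MvPolynomial.eval₂Hom (Int.castRingHom F) (pt a a' εI εI' Y b)

def clsb (t : ℤ) (i : I) (i' : I') : Bool := decide ((εI i = εI' i') ↔ Even t)

def SolRel (t : ℤ) : Prop := ∀ (i : I) (i' : I'),
  YRel (evB a a' εI εI' Y (clsb εI εI' t i i')) (Yhat εI εI' τ t i i') (Y t i i')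

lemma clsb_step2 (t : ℤ) (i : I) (i' : I') :
    clsb εI εI' (t+2) i i' = clsb εI εI' t i i' := by
  have hEE : Even (t+2) ↔ Even t := by simp only [Int.even_iff]; omega
  exact decide_eq_decide.mpr (iff_congr Iff.rfl hEE)

lemma clsb_period (N : ℕ) (t : ℤ) (i : I) (i' : I') :
    clsb εI εI' (t + 2 * (N : ℤ)) i i' = clsb εI εI' t i i' := by
  have hEE : Even (t + 2 * (N : ℤ)) ↔ Even t := by simp only [Int.even_iff]; omega
  exact decide_eq_decide.mpr (iff_congr Iff.rfl hEE)

lemma clsb_adjI {i j : I} (hne : εI i ≠ εI j) (t : ℤ) (i' : I') :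
    clsb εI εI' (t+1) j i' = clsb εI εI' t i i' := by
  have h1 := bool_flip hne (εI' i')
  have h2 : Even (t+1) ↔ ¬ Even t := Int.even_add_one
  exact decide_eq_decide.mpr (by tauto)

lemma clsb_adjI' {i' j' : I'} (hne : εI' i' ≠ εI' j') (t : ℤ) (i : I) :
    clsb εI εI' (t+1) i j' = clsb εI εI' t i i' := by
  have h1 := bool_flip' hne (εI i)
  have h2 : Even (t+1) ↔ ¬ Even t := Int.even_add_one
  exact decide_eq_decide.mpr (by tauto)

variable (hτ : ∀ (b : Bool) (i : I) (i' : I'),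
      τ b (Ygen i i') =
        if (εI i = εI' i') = (b = true) then
          Ygen i i' * Aprod a i i' * (Bprod a' i i')⁻¹
        else (Ygen i i')⁻¹)
  (hbip : ∀ i j, a i j ≠ 0 → εI i ≠ εI j)
  (hbip' : ∀ i' j', a' i' j' ≠ 0 → εI' i' ≠ εI' j')
  (h0 : ∀ t i i', Y t i i' ≠ 0) (h1 : ∀ t i i', 1 + Y t i i' ≠ 0)
  (h2 : ∀ t i i', 1 + (Y t i i')⁻¹ ≠ 0)
  (hY : ∀ t i i', Y (t - 1) i i' * Y (t + 1) i i' *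
            ∏ j', (1 + (Y t i j')⁻¹) ^ a' i' j' = ∏ j, (1 + Y t j i') ^ a i j)

include h1 h2 in
lemma mden_ne_zero (i : I) (i' : I') : mden a a' Y i i' ≠ 0 := by
  unfold mden
  exact mul_ne_zero (Finset.prod_ne_zero_iff.2 fun j _ => pow_ne_zero _ (h1 0 j i'))
    (inv_ne_zero (Finset.prod_ne_zero_iff.2 fun j' _ => pow_ne_zero _ (h2 0 i j')))

include hτ hbip hbip' h0 h1 h2 hY in
lemma rel_forward (t : ℤ) (ih1 : SolRel a a' εI εI' τ Y t)
    (ih2 : SolRel a a' εI εI' τ Y (t+1)) : SolRel a a' εI εI' τ Y (t+2) := by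
  intro i i'
  rw [clsb_step2]
  set ev := evB a a' εI εI' Y (clsb εI εI' t i i') with hev
  have HF := hY (t+1) i i'
  rw [show t+1-1 = t by ring, show t+1+1 = t+2 by ring] at HF
  have hBF : (∏ j', (1 + (Y (t+1) i j')⁻¹) ^ a' i' j') ≠ 0 :=
    Finset.prod_ne_zero_iff.2 fun j' _ => pow_ne_zero _ (h2 (t+1) i j')
  have hKeyF : Y (t+2) i i' = (∏ j, (1 + Y (t+1) j i') ^ a i j) *
      (Y t i i' * ∏ j', (1 + (Y (t+1) i j')⁻¹) ^ a' i' j')⁻¹ := by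
    rw [eq_mul_inv_iff_mul_eq₀ (mul_ne_zero (h0 t i i') hBF)]
    linear_combination HF
  have HK := Yhat_rel a a' εI εI' τ hτ hbip hbip' (t+1) i i'
  rw [show t+1-1 = t by ring, show t+1+1 = t+2 by ring] at HK
  have hBK : (∏ j', (1 + (Yhat εI εI' τ (t+1) i j')⁻¹) ^ a' i' j') ≠ 0 :=
    Finset.prod_ne_zero_iff.2 fun j' _ => pow_ne_zero _ (one_add_inv_Yhat_ne_zero εI εI' τ (t+1) i j')
  have hKeyK : Yhat εI εI' τ (t+2) i i' = (∏ j, (1 + Yhat εI εI' τ (t+1) j i') ^ a i j) *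
      (Yhat εI εI' τ t i i' * ∏ j', (1 + (Yhat εI εI' τ (t+1) i j')⁻¹) ^ a' i' j')⁻¹ := by
    rw [eq_mul_inv_iff_mul_eq₀ (mul_ne_zero (Yhat_ne_zero εI εI' τ t i i') hBK)]
    linear_combination HK
  have RB : YRel ev (∏ j', (1 + (Yhat εI εI' τ (t+1) i j')⁻¹) ^ a' i' j')
      (∏ j', (1 + (Y (t+1) i j')⁻¹) ^ a' i' j') := by
    apply yrel_prod
    intro j' _
    by_cases ha : a' i' j' = 0
    · simp only [ha, pow_zero]; exact yrel_one ev
    · have hcls := clsb_adjI' εI εI' (hbip' i' j' ha) t i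
      have hr := ih2 i j'
      rw [hcls] at hr
      exact yrel_pow ev (yrel_add ev (yrel_one ev) (yrel_inv ev hr (h0 (t+1) i j'))) _
  have RA : YRel ev (∏ j, (1 + Yhat εI εI' τ (t+1) j i') ^ a i j)
      (∏ j, (1 + Y (t+1) j i') ^ a i j) := by
    apply yrel_prod
    intro j _
    by_cases ha : a i j = 0
    · simp only [ha, pow_zero]; exact yrel_one ev
    · have hcls := clsb_adjI εI εI' (hbip i j ha) t i'
      have hr := ih2 j i'
      rw [hcls] at hr
      exact yrel_pow ev (yrel_add ev (yrel_one ev) hr) _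
  rw [hKeyF, hKeyK]
  exact yrel_mul ev RA (yrel_inv ev (yrel_mul ev (ih1 i i') RB)
    (mul_ne_zero (h0 t i i') hBF))

include hτ hbip hbip' h0 h1 h2 hY in
lemma rel_backward (t : ℤ) (ih1 : SolRel a a' εI εI' τ Y (t+1))
    (ih2 : SolRel a a' εI εI' τ Y (t+2)) : SolRel a a' εI εI' τ Y t := by
  intro i i'
  have HF := hY (t+1) i i'
  rw [show t+1-1 = t by ring, show t+1+1 = t+2 by ring] at HF
  have hBF : (∏ j', (1 + (Y (t+1) i j')⁻¹) ^ a' i' j') ≠ 0 :=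
    Finset.prod_ne_zero_iff.2 fun j' _ => pow_ne_zero _ (h2 (t+1) i j')
  have hKeyF : Y t i i' = (∏ j, (1 + Y (t+1) j i') ^ a i j) *
      (Y (t+2) i i' * ∏ j', (1 + (Y (t+1) i j')⁻¹) ^ a' i' j')⁻¹ := by
    rw [eq_mul_inv_iff_mul_eq₀ (mul_ne_zero (h0 (t+2) i i') hBF)]
    linear_combination HF
  have HK := Yhat_rel a a' εI εI' τ hτ hbip hbip' (t+1) i i'
  rw [show t+1-1 = t by ring, show t+1+1 = t+2 by ring] at HK
  have hKeyK : Yhat εI εI' τ t i i' = (∏ j, (1 + Yhat εI εI' τ (t+1) j i') ^ a i j) *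
      (Yhat εI εI' τ (t+2) i i' * ∏ j', (1 + (Yhat εI εI' τ (t+1) i j')⁻¹) ^ a' i' j')⁻¹ := by
    have hBK : (∏ j', (1 + (Yhat εI εI' τ (t+1) i j')⁻¹) ^ a' i' j') ≠ 0 :=
      Finset.prod_ne_zero_iff.2 fun j' _ => pow_ne_zero _ (one_add_inv_Yhat_ne_zero εI εI' τ (t+1) i j')
    rw [eq_mul_inv_iff_mul_eq₀ (mul_ne_zero (Yhat_ne_zero εI εI' τ (t+2) i i') hBK)]
    linear_combination HK
  set ev := evB a a' εI εI' Y (clsb εI εI' t i i') with hev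
  have RB : YRel ev (∏ j', (1 + (Yhat εI εI' τ (t+1) i j')⁻¹) ^ a' i' j')
      (∏ j', (1 + (Y (t+1) i j')⁻¹) ^ a' i' j') := by
    apply yrel_prod
    intro j' _
    by_cases ha : a' i' j' = 0
    · simp only [ha, pow_zero]; exact yrel_one ev
    · have hcls := clsb_adjI' εI εI' (hbip' i' j' ha) t i
      have hr := ih1 i j'
      rw [hcls] at hr
      exact yrel_pow ev (yrel_add ev (yrel_one ev) (yrel_inv ev hr (h0 (t+1) i j'))) _
  have RA : YRel ev (∏ j, (1 + Yhat εI εI' τ (t+1) j i') ^ a i j)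
      (∏ j, (1 + Y (t+1) j i') ^ a i j) := by
    apply yrel_prod
    intro j _
    by_cases ha : a i j = 0
    · simp only [ha, pow_zero]; exact yrel_one ev
    · have hcls := clsb_adjI εI εI' (hbip i j ha) t i'
      have hr := ih1 j i'
      rw [hcls] at hr
      exact yrel_pow ev (yrel_add ev (yrel_one ev) hr) _
  have hr2 := ih2 i i'
  rw [clsb_step2] at hr2
  rw [hKeyF, hKeyK]
  exact yrel_mul ev RA (yrel_inv ev (yrel_mul ev hr2 RB)
    (mul_ne_zero (h0 (t+2) i i') hBF))

include h0 in
lemma rel_base0 : SolRel a a' εI εI' τ Y 0 := by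
  intro i i'
  by_cases he : εI i = εI' i'
  · have hcls : clsb εI εI' 0 i i' = true := by
      simp [clsb, he]
    have hyh : Yhat εI εI' τ 0 i i' = Ygen i i' := by
      unfold Yhat
      rw [if_pos (by simp [he]), gAut_zero]
      rfl
    rw [hcls, hyh]
    have hb := yrel_algebraMap (K := YSysField I I') (evB a a' εI εI' Y true)
      (MvPolynomial.X (i, i'))
    have hev : evB a a' εI εI' Y true (MvPolynomial.X (i, i')) = Y 0 i i' := by
      simp [evB, pt, he]
    rw [hev] at hb
    exact hb
  · have hcls : clsb εI εI' 0 i i' = false := by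
      simp [clsb, he]
    have hyh : Yhat εI εI' τ 0 i i' = (Ygen i i')⁻¹ := by
      unfold Yhat
      rw [if_neg (by simp [he]), gAut_zero]
      rfl
    rw [hcls, hyh]
    have hb := yrel_algebraMap (K := YSysField I I') (evB a a' εI εI' Y false)
      (MvPolynomial.X (i, i'))
    have hev : evB a a' εI εI' Y false (MvPolynomial.X (i, i')) = (Y 0 i i')⁻¹ := by
      simp [evB, pt, he]
    rw [hev] at hb
    have := yrel_inv (evB a a' εI εI' Y false) hb (inv_ne_zero (h0 0 i i'))
    rwa [inv_inv] at this

include hτ hbip hbip' h0 h1 h2 in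
lemma rel_base1 : SolRel a a' εI εI' τ Y 1 := by
  have hodd : ¬ Even (1:ℤ) := by decide
  intro i i'
  by_cases he : εI i = εI' i'
  · have hcls : clsb εI εI' 1 i i' = false := by
      simp [clsb, he, hodd]
    have hyh : Yhat εI εI' τ 1 i i' = Ygen i i' := by
      unfold Yhat
      rw [if_neg (by simp [he, hodd]), gAut_one, hτ false i i',
        if_neg (by simp [eq_iff_iff]; tauto), inv_inv]
    rw [hcls, hyh]
    have hb := yrel_algebraMap (K := YSysField I I') (evB a a' εI εI' Y false)
      (MvPolynomial.X (i, i'))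
    have hev : evB a a' εI εI' Y false (MvPolynomial.X (i, i')) = Y 1 i i' := by
      simp [evB, pt, he]
    rw [hev] at hb
    exact hb
  · have hcls : clsb εI εI' 1 i i' = true := by
      simp [clsb, he, hodd]
    have hyh : Yhat εI εI' τ 1 i i' = Ygen i i' * Aprod a i i' * (Bprod a' i i')⁻¹ := by
      unfold Yhat
      rw [if_pos (by simp [he, hodd]), gAut_one, hτ false i i',
        if_pos (by simp [eq_iff_iff]; tauto)]
    set ev := evB a a' εI εI' Y true with hevdef
    have hMA : (∏ j, (1 + Y 0 j i') ^ a i j) ≠ 0 :=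
      Finset.prod_ne_zero_iff.2 fun j _ => pow_ne_zero _ (h1 0 j i')
    have hMB : (∏ j', (1 + (Y 0 i j')⁻¹) ^ a' i' j') ≠ 0 :=
      Finset.prod_ne_zero_iff.2 fun j' _ => pow_ne_zero _ (h2 0 i j')
    have rX : YRel ev (Ygen i i') (Y 1 i i' * (mden a a' Y i i')⁻¹) := by
      have hb := yrel_algebraMap (K := YSysField I I') ev (MvPolynomial.X (i, i'))
      have hev : ev (MvPolynomial.X (i, i')) = Y 1 i i' * (mden a a' Y i i')⁻¹ := by
        simp [hevdef, evB, pt, he]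
      rwa [hev] at hb
    have rA : YRel ev (Aprod a i i') (∏ j, (1 + Y 0 j i') ^ a i j) := by
      unfold Aprod
      apply yrel_prod
      intro j _
      by_cases ha : a i j = 0
      · simp only [ha, pow_zero]; exact yrel_one ev
      · have hji : εI j = εI' i' := bool_resolve (hbip i j ha) he
        have hb := yrel_algebraMap (K := YSysField I I') ev (MvPolynomial.X (j, i'))
        have hev : ev (MvPolynomial.X (j, i')) = Y 0 j i' := by
          simp [hevdef, evB, pt, hji]
        rw [hev] at hb
        exact yrel_pow ev (yrel_add ev (yrel_one ev) hb) _
    have rB : YRel ev (Bprod a' i i') (∏ j', (1 + (Y 0 i j')⁻¹) ^ a' i' j') := by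
      unfold Bprod
      apply yrel_prod
      intro j' _
      by_cases ha : a' i' j' = 0
      · simp only [ha, pow_zero]; exact yrel_one ev
      · have hij' : εI i = εI' j' := bool_resolve' (hbip' i' j' ha) he
        have hb := yrel_algebraMap (K := YSysField I I') ev (MvPolynomial.X (i, j'))
        have hev : ev (MvPolynomial.X (i, j')) = Y 0 i j' := by
          simp [hevdef, evB, pt, hij']
        rw [hev] at hb
        exact yrel_pow ev (yrel_add ev (yrel_one ev)
          (yrel_inv ev hb (h0 0 i j'))) _
    have rAll := yrel_mul ev (yrel_mul ev rX rA) (yrel_inv ev rB hMB)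
    have hval : Y 1 i i' * (mden a a' Y i i')⁻¹ * (∏ j, (1 + Y 0 j i') ^ a i j) *
        (∏ j', (1 + (Y 0 i j')⁻¹) ^ a' i' j')⁻¹ = Y 1 i i' := by
      unfold mden
      field_simp
      rw [mul_div_assoc, div_self (by simpa [one_div] using hMB), mul_one]
    rw [hval] at rAll
    rw [hcls, hyh]
    exact rAll

end spec

end YAux

/-- Periodicity of the `Y`-system associated with a pair of Dynkin diagrams reduces to
the finiteness of the order of the automorphism `φ = τ₋ τ₊`: all solutions of the
`Y`-system are periodic in `t` of period dividing `2(h+h')` if and only if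
`φ^{h+h'} = 1`.

Here `I, I'` are the vertex sets of the two diagrams, `a, a'` their incidence
matrices (symmetric with zero diagonal), `εI, εI'` the bipartitions (`true` codes
`+`), `h, h'` the Coxeter numbers, `τ b` (for `b : Bool` coding `ε = ±1`) the field
automorphisms of `K = Frac(ℤ[Y_{ii'}])` determined by the stated formulas on the
generators, and `ε(i,i') = +1` iff `εI i = εI' i'`. -/
theorem periodicity_iff_finite_order
    {I I' : Type} [Fintype I] [Fintype I'] [DecidableEq I] [DecidableEq I']
    (a : I → I → ℕ) (a' : I' → I' → ℕ)
    (hsymm : ∀ i j, a i j = a j i) (hdiag : ∀ i, a i i = 0)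
    (hsymm' : ∀ i' j', a' i' j' = a' j' i') (hdiag' : ∀ i', a' i' i' = 0)
    (εI : I → Bool) (εI' : I' → Bool)
    (hbip : ∀ i j, a i j ≠ 0 → εI i ≠ εI j)
    (hbip' : ∀ i' j', a' i' j' ≠ 0 → εI' i' ≠ εI' j')
    (h h' : ℕ)
    (τ : Bool → RingAut (YSysField I I'))
    (hτ : ∀ (b : Bool) (i : I) (i' : I'),
      τ b (Ygen i i') =
        if (εI i = εI' i') = (b = true) then
          Ygen i i' * (∏ j, (1 + Ygen j i') ^ a i j) *
            (∏ j', (1 + (Ygen i j')⁻¹) ^ a' i' j')⁻¹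
        else (Ygen i i')⁻¹) :
    (∀ (F : Type) [Field F] (Y : ℤ → I → I' → F),
        (∀ t i i', Y t i i' ≠ 0) →
        (∀ t i i', 1 + Y t i i' ≠ 0) →
        (∀ t i i', 1 + (Y t i i')⁻¹ ≠ 0) →
        (∀ t i i', Y (t - 1) i i' * Y (t + 1) i i' *
            ∏ j', (1 + (Y t i j')⁻¹) ^ a' i' j' = ∏ j, (1 + Y t j i') ^ a i j) →
        ∀ t i i', Y (t + 2 * (h + h')) i i' = Y t i i') ↔
      (τ false * τ true) ^ (h + h') = 1 := by
  classical
  have hτ' : ∀ (b : Bool) (i : I) (i' : I'),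
      τ b (Ygen i i') =
        if (εI i = εI' i') = (b = true) then
          Ygen i i' * YAux.Aprod a i i' * (YAux.Bprod a' i i')⁻¹
        else (Ygen i i')⁻¹ := by
    intro b i i'
    rw [hτ b i i']
    rfl
  constructor
  · intro H
    apply YAux.aut_eq_one
    intro i i'
    have hper := H (YSysField I I') (YAux.Yhat εI εI' τ)
      (YAux.Yhat_ne_zero εI εI' τ) (YAux.one_add_Yhat_ne_zero εI εI' τ)
      (YAux.one_add_inv_Yhat_ne_zero εI εI' τ)
      (fun t i i' => YAux.Yhat_rel a a' εI εI' τ hτ' hbip hbip' t i i') 0 i i'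
    rw [show ((0:ℤ) + 2 * (h + h')) = 2 * ((h + h' : ℕ) : ℤ) by push_cast; ring] at hper
    exact YAux.fix_of_periodic εI εI' τ (h+h') i i' hper
  · intro hφ F _ Y h0 h1 h2 hYs t i i'
    have S : ∀ s : ℤ, YAux.SolRel a a' εI εI' τ Y s ∧ YAux.SolRel a a' εI εI' τ Y (s+1) := by
      intro s
      induction s using Int.induction_on with
      | zero =>
        refine ⟨YAux.rel_base0 a a' εI εI' τ Y h0, ?_⟩
        rw [zero_add]
        exact YAux.rel_base1 a a' εI εI' τ Y hτ' hbip hbip' h0 h1 h2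
      | succ k ih =>
        refine ⟨ih.2, ?_⟩
        rw [show ((k:ℤ) + 1 + 1) = (k:ℤ) + 2 by ring]
        exact YAux.rel_forward a a' εI εI' τ Y hτ' hbip hbip' h0 h1 h2 hYs k ih.1 ih.2
      | pred k ih =>
        constructor
        · apply YAux.rel_backward a a' εI εI' τ Y hτ' hbip hbip' h0 h1 h2 hYs (-(k:ℤ) - 1)
          · rw [show (-(k:ℤ) - 1 + 1) = -(k:ℤ) by ring]; exact ih.1
          · rw [show (-(k:ℤ) - 1 + 2) = -(k:ℤ) + 1 by ring]; exact ih.2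
        · rw [show (-(k:ℤ) - 1 + 1) = -(k:ℤ) by ring]; exact ih.1
    have r1 := (S t).1 i i'
    have r2 := (S (t + 2 * (h + h'))).1 i i'
    rw [show (t + 2 * ((h:ℤ) + (h':ℤ))) = t + 2 * ((h + h' : ℕ) : ℤ) by push_cast; ring] at r2
    rw [YAux.clsb_period εI εI' (h + h') t i i',
      YAux.Yhat_periodic εI εI' τ hφ t i i'] at r2
    have hfin := YAux.yrel_unique _ r2 r1
    rw [show (t + 2 * ((h:ℤ) + (h':ℤ))) = t + 2 * ((h + h' : ℕ) : ℤ) by push_cast; ring]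
    exact hfin
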